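/- Let K be a real quadratic field with fundamental unit η, and σ the nontrivial embedding. For every nonzero algebraic integer α in K, there exists an integer m such that the Weil height satisfies h(η^m·α) ≤ (1/2)·log|α·σ(α)| + (1/2)·log η. -/

import Mathlib

open NumberField

/-- The absolute logarithmic Weil height of an algebraic integer `α` of a
number field `K`: since all finite places of an algebraic integer contribute
nothing, it equals `(1/[K:ℚ]) ∑_{v infinite} mult(v) * max 0 (log v(α))`. -/
noncomputable def intWeilHeight (K : Type*) [Field K] [NumberField K]
    (α : 𝓞 K) : ℝ :=
  (Module.finrank ℚ K : ℝ)⁻¹ *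
    ∑ v : InfinitePlace K, (v.mult : ℝ) * max 0 (Real.log (v (α : K)))

theorem stmt_8 (K : Type*) [Field K] [NumberField K]
    (h2 : Module.finrank ℚ K = 2)
    (φ σ : K →+* ℝ) (hφσ : φ ≠ σ)
    (η : (𝓞 K)ˣ) (hη : 1 < φ (η : 𝓞 K))
    (hfund : ∀ u : (𝓞 K)ˣ, 1 < φ (u : 𝓞 K) → φ (η : 𝓞 K) ≤ φ (u : 𝓞 K))
    (α : 𝓞 K) (hα : α ≠ 0) :
    ∃ m : ℤ,
      intWeilHeight K (((η ^ m : (𝓞 K)ˣ) : 𝓞 K) * α) ≤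
        (1 / 2) * Real.log |φ (α : K) * σ (α : K)| +
          (1 / 2) * Real.log (φ (η : 𝓞 K)) := by
  classical
  -- the two complex embeddings induced by φ and σ
  set embφ : K →+* ℂ := Complex.ofRealHom.comp φ with hembφ
  set embσ : K →+* ℂ := Complex.ofRealHom.comp σ with hembσ
  have hrealφ : ComplexEmbedding.IsReal embφ := by
    rw [ComplexEmbedding.isReal_iff]
    ext x
    simp [embφ, ComplexEmbedding.conjugate, Complex.conj_ofReal]
  have hrealσ : ComplexEmbedding.IsReal embσ := by
    rw [ComplexEmbedding.isReal_iff]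
    ext x
    simp [embσ, ComplexEmbedding.conjugate, Complex.conj_ofReal]
  have hembne : embφ ≠ embσ := by
    intro h
    apply hφσ
    ext x
    have h' := RingHom.congr_fun h x
    simp only [hembφ, hembσ, RingHom.comp_apply, Complex.ofRealHom_eq_coe,
      Complex.ofReal_inj] at h'
    exact h'
  -- the two infinite places
  set w1 : InfinitePlace K := InfinitePlace.mk embφ with hw1
  set w2 : InfinitePlace K := InfinitePlace.mk embσ with hw2
  have hw12 : w1 ≠ w2 := by
    intro h
    rcases InfinitePlace.mk_eq_iff.mp h with h' | h'
    · exact hembne h'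
    · rw [ComplexEmbedding.isReal_iff.mp hrealφ] at h'
      exact hembne h'
  have hmult1 : w1.mult = 1 := by
    simp [InfinitePlace.mult, InfinitePlace.isReal_mk_iff.mpr hrealφ]
    exact InfinitePlace.isReal_mk_iff.mpr hrealφ
  have hmult2 : w2.mult = 1 := by
    simp [InfinitePlace.mult, InfinitePlace.isReal_mk_iff.mpr hrealσ]
    exact InfinitePlace.isReal_mk_iff.mpr hrealσ
  have hw1app : ∀ x : K, w1 x = |φ x| := by
    intro x
    rw [hw1, InfinitePlace.apply]
    simp [embφ]
  have hw2app : ∀ x : K, w2 x = |σ x| := by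
    intro x
    rw [hw2, InfinitePlace.apply]
    simp [embσ]
  -- all infinite places
  have key : ∀ v : InfinitePlace K, v = w1 ∨ v = w2 := by
    intro v
    by_contra hv
    push_neg at hv
    have hsum := InfinitePlace.sum_mult_eq (K := K)
    rw [h2] at hsum
    have hle : ∑ w ∈ ({w1, w2, v} : Finset (InfinitePlace K)), w.mult ≤ 2 :=
      hsum ▸ Finset.sum_le_sum_of_subset (Finset.subset_univ _)
    rw [Finset.sum_insert (by simp [hw12, Ne.symm hv.1]),
      Finset.sum_insert (by simp [Ne.symm hv.2]), Finset.sum_singleton] at hle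
    have hvpos := InfinitePlace.mult_pos (w := v)
    omega
  have huniv : (Finset.univ : Finset (InfinitePlace K)) = {w1, w2} := by
    symm
    apply Finset.eq_univ_iff_forall.mpr
    intro v
    rcases key v with h | h <;> simp [h]
  -- height formula
  have hheight : ∀ x : 𝓞 K, intWeilHeight K x =
      2⁻¹ * (max 0 (Real.log |φ (x : K)|) + max 0 (Real.log |σ (x : K)|)) := by
    intro x
    rw [intWeilHeight, h2, huniv, Finset.sum_insert (by simp [hw12]), Finset.sum_singleton,
      hmult1, hmult2, hw1app, hw2app]
    norm_num
  -- product formula: |φ x| * |σ x| = |norm x|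
  have hprod : ∀ x : 𝓞 K, |φ (x : K)| * |σ (x : K)| = |(Algebra.norm ℤ x : ℝ)| := by
    intro x
    have := InfinitePlace.prod_eq_abs_norm (x : K)
    rw [huniv, Finset.prod_insert (by simp [hw12]), Finset.prod_singleton,
      hmult1, hmult2, pow_one, pow_one, hw1app, hw2app] at this
    rw [this, ← Algebra.coe_norm_int x]
    push_cast
    rfl
  have hφinj : Function.Injective φ := φ.injective
  have hαK : (α : K) ≠ 0 := by
    simpa using (RingOfIntegers.coe_ne_zero_iff).mpr hα
  have hA : (0:ℝ) < |φ (α : K)| := abs_pos.mpr (fun h => hαK (hφinj (by simpa using h)))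
  have hB : (0:ℝ) < |σ (α : K)| := abs_pos.mpr (fun h => hαK (σ.injective (by simpa using h)))
  -- |N(α)| ≥ 1
  have hNα : (1:ℝ) ≤ |φ (α : K)| * |σ (α : K)| := by
    rw [hprod α]
    have hne : Algebra.norm ℤ α ≠ 0 := by
      intro h
      have hpos := mul_pos hA hB
      rw [hprod α, h] at hpos
      simp at hpos
    have : (1:ℤ) ≤ |Algebra.norm ℤ α| := Int.one_le_abs (by simpa using hne)
    calc (1:ℝ) = ((1:ℤ):ℝ) := by norm_num
    _ ≤ ((|Algebra.norm ℤ α| : ℤ) : ℝ) := by exact_mod_cast this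
    _ = |(Algebra.norm ℤ α : ℝ)| := by push_cast; ring
  -- the unit has |N(η)| = 1, so |σ η| = 1 / φ η
  have hE : (1:ℝ) < φ ((η : 𝓞 K) : K) := hη
  have hE0 : (0:ℝ) < φ ((η : 𝓞 K) : K) := lt_trans one_pos hE
  have hNη : |φ ((η : 𝓞 K) : K)| * |σ ((η : 𝓞 K) : K)| = 1 := by
    rw [hprod (η : 𝓞 K)]
    have : IsUnit (Algebra.norm ℤ (η : 𝓞 K)) := η.isUnit.map (Algebra.norm ℤ)
    rcases Int.isUnit_iff.mp this with h | h <;> rw [h] <;> norm_num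
  have hση : |σ ((η : 𝓞 K) : K)| = (φ ((η : 𝓞 K) : K))⁻¹ := by
    rw [abs_of_pos hE0] at hNη
    field_simp
    linarith [hNη]
  -- coercion of unit powers
  have hcoe : ∀ m : ℤ, (((η ^ m : (𝓞 K)ˣ) : 𝓞 K) : K) = (((η : 𝓞 K) : K)) ^ m := by
    intro m
    have h1 : (((η ^ m : (𝓞 K)ˣ) : 𝓞 K) : K) =
        ((Units.map (algebraMap (𝓞 K) K : (𝓞 K) →* K) (η ^ m) : Kˣ) : K) := rfl
    rw [h1, map_zpow, Units.val_zpow_eq_zpow_val]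
    rfl
  -- abbreviations
  set E : ℝ := φ ((η : 𝓞 K) : K) with hEdef
  set a : ℝ := Real.log |φ (α : K)| with ha
  set b : ℝ := Real.log |σ (α : K)| with hb
  set ε : ℝ := Real.log E with hε
  have hεpos : 0 < ε := Real.log_pos hE
  have hab : 0 ≤ a + b := by
    rw [ha, hb, ← Real.log_mul (ne_of_gt hA) (ne_of_gt hB)]
    exact Real.log_nonneg hNα
  -- choose m
  refine ⟨Int.ceil (-a / ε), ?_⟩
  set m : ℤ := Int.ceil (-a / ε) with hm
  have hm1 : -a / ε ≤ (m : ℝ) := Int.le_ceil _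
  have hm2 : (m : ℝ) < -a / ε + 1 := Int.ceil_lt_add_one _
  have hge : 0 ≤ a + m * ε := by
    have := (div_le_iff₀ hεpos).mp hm1
    linarith
  have hlt : a + m * ε < ε := by
    have h' : (m : ℝ) - 1 < -a / ε := by linarith
    have h'' : ((m : ℝ) - 1) * ε < -a := (lt_div_iff₀ hεpos).mp h'
    nlinarith
  -- compute the two logs
  have habszpow : ∀ (x : ℝ) (n : ℤ), |x ^ n| = |x| ^ n := fun x n =>
    map_zpow₀ (AbsoluteValue.abs : AbsoluteValue ℝ ℝ) x n
  have hxval : ((((η ^ m : (𝓞 K)ˣ) : 𝓞 K) * α : 𝓞 K) : K) =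
      (((η : 𝓞 K) : K)) ^ m * (α : K) := by
    push_cast
    exact congrArg (fun t => t * (α : K)) (hcoe m)
  have hφlog : Real.log |φ ((((η ^ m : (𝓞 K)ˣ) : 𝓞 K) * α : 𝓞 K) : K)| = a + m * ε := by
    rw [hxval, map_mul, map_zpow₀, abs_mul, habszpow, abs_of_pos hE0,
      Real.log_mul (by positivity) (ne_of_gt hA), Real.log_zpow, ← hε, ← ha]
    ring
  have hσlog : Real.log |σ ((((η ^ m : (𝓞 K)ˣ) : 𝓞 K) * α : 𝓞 K) : K)| = b - m * ε := by
    rw [hxval, map_mul, map_zpow₀, abs_mul, habszpow, hση,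
      Real.log_mul (by positivity) (ne_of_gt hB), Real.log_zpow, Real.log_inv, ← hε, ← hb]
    ring
  rw [hheight, hφlog, hσlog, abs_mul, Real.log_mul (ne_of_gt hA) (ne_of_gt hB), ← ha, ← hb]
  rcases le_or_gt (b - m * ε) 0 with h | h
  · rw [max_eq_right hge, max_eq_left h]
    linarith
  · rw [max_eq_right hge, max_eq_right (le_of_lt h)]
    linarith
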